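/- (Lemma 3.4, vanishing stationarity residual in U.) Assume ρ/2 − L_h/ρ − L_h > 0, f ≥ 0 and h ≥ 0. For ADMM iterates (U^k, V^k, P^k) as in the context, define d̄^k = Hᵀ(P^k − P^{k+1}) + ρ Hᵀ(V^k − V^{k+1}) ∈ ℝ^M for k ≥ 1 (in the paper, d̄^k is an element of the partial subdifferential ∂_U L(U^{k+1}, V^{k+1}, P^{k+1})). Then ‖d̄^k‖ ≤ ‖H‖_{op}·(L_h + ρ)·‖V^{k+1} − V^k‖ for all k ≥ 1, and in particular ‖d̄^k‖ → 0 as k → ∞. -/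

import Mathlib

open scoped RealInnerProductSpace
open Filter

/-- Matrix–vector product `H U` as a map between Euclidean spaces. -/
noncomputable def mvec {M N : ℕ} (H : Matrix (Fin N) (Fin M) ℝ)
    (U : EuclideanSpace ℝ (Fin M)) : EuclideanSpace ℝ (Fin N) :=
  (WithLp.equiv 2 (Fin N → ℝ)).symm (H.mulVec (WithLp.equiv 2 (Fin M → ℝ) U))

/-- The augmented Lagrangian
`L(U,V,P) = f(U) + h(V) + ⟨P, V − HU⟩ + (ρ/2)‖V − HU‖²`. -/
noncomputable def lagr {M N : ℕ} (H : Matrix (Fin N) (Fin M) ℝ) (ρ : ℝ)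
    (f : EuclideanSpace ℝ (Fin M) → ℝ) (h : EuclideanSpace ℝ (Fin N) → ℝ)
    (U : EuclideanSpace ℝ (Fin M)) (V P : EuclideanSpace ℝ (Fin N)) : ℝ :=
  f U + h V + ⟪P, V - mvec H U⟫ + (ρ / 2) * ‖V - mvec H U‖ ^ 2

/-- The box constraint set `K = {U : 0 ≤ Uᵢ ≤ 1 for all i}`. -/
def Kbox (M : ℕ) : Set (EuclideanSpace ℝ (Fin M)) := {U | ∀ i, 0 ≤ U i ∧ U i ≤ 1}

lemma mvec_eq {M N : ℕ} (H : Matrix (Fin N) (Fin M) ℝ) (U : EuclideanSpace ℝ (Fin M)) :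
    mvec H U = Matrix.toEuclideanLin H U := by
  rw [Matrix.toEuclideanLin_apply]; rfl

lemma inner_mvec_transpose {M N : ℕ} (H : Matrix (Fin N) (Fin M) ℝ)
    (x : EuclideanSpace ℝ (Fin N)) (y : EuclideanSpace ℝ (Fin M)) :
    ⟪mvec H.transpose x, y⟫ = ⟪x, mvec H y⟫ := by
  simp only [mvec, PiLp.inner_apply, RCLike.inner_apply, conj_trivial]
  simp only [WithLp.equiv_symm_apply, PiLp.toLp_apply]
  conv_lhs => enter [2, i]; rw [mul_comm]
  conv_rhs => enter [2, i]; rw [mul_comm]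
  rw [show (∑ i, (H.transpose.mulVec (WithLp.equiv 2 (Fin N → ℝ) x)) i * y i)
      = dotProduct (H.transpose.mulVec (WithLp.equiv 2 (Fin N → ℝ) x))
        (WithLp.equiv 2 (Fin M → ℝ) y) from rfl]
  rw [Matrix.mulVec_transpose, ← Matrix.dotProduct_mulVec]
  rfl

lemma mvec_norm_le {M N : ℕ} (H : Matrix (Fin N) (Fin M) ℝ) (y : EuclideanSpace ℝ (Fin M)) :
    ‖mvec H y‖ ≤ ‖LinearMap.toContinuousLinearMap (Matrix.toEuclideanLin H)‖ * ‖y‖ := by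
  rw [mvec_eq]
  exact (LinearMap.toContinuousLinearMap (Matrix.toEuclideanLin H)).le_opNorm y

lemma mvec_transpose_norm_le {M N : ℕ} (H : Matrix (Fin N) (Fin M) ℝ)
    (x : EuclideanSpace ℝ (Fin N)) :
    ‖mvec H.transpose x‖ ≤ ‖LinearMap.toContinuousLinearMap (Matrix.toEuclideanLin H)‖ * ‖x‖ := by
  set C := ‖LinearMap.toContinuousLinearMap (Matrix.toEuclideanLin H)‖ with hC
  set w := mvec H.transpose x with hw
  rcases eq_or_lt_of_le (norm_nonneg w) with h0 | h0
  · rw [← h0]; positivity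
  · have h1 : ‖w‖ ^ 2 = ⟪x, mvec H w⟫ := by
      rw [← inner_mvec_transpose, real_inner_self_eq_norm_sq]
    have h2 : ⟪x, mvec H w⟫ ≤ ‖x‖ * (C * ‖w‖) :=
      (real_inner_le_norm _ _).trans (by
        have := mvec_norm_le H w
        exact mul_le_mul_of_nonneg_left this (norm_nonneg x))
    nlinarith [norm_nonneg x]

lemma mvec_add_smul {M N : ℕ} (H : Matrix (Fin N) (Fin M) ℝ) (ρ : ℝ)
    (a b : EuclideanSpace ℝ (Fin M)) :
    mvec H (a + ρ • b) = mvec H a + ρ • mvec H b := by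
  simp [mvec_eq, map_add, map_smul]

lemma descent_lemma {N : ℕ} {Lh : ℝ} (h : EuclideanSpace ℝ (Fin N) → ℝ)
    (hdiff : Differentiable ℝ h)
    (hlip : ∀ V W : EuclideanSpace ℝ (Fin N),
      ‖gradient h V - gradient h W‖ ≤ Lh * ‖V - W‖)
    (hLh : 0 < Lh)
    (x y : EuclideanSpace ℝ (Fin N)) :
    |h y - h x - ⟪gradient h x, y - x⟫| ≤ Lh / 2 * ‖y - x‖ ^ 2 := by
  set d := y - x with hd
  have hline : ∀ t : ℝ, HasDerivAt (fun s : ℝ => x + s • d) d t := by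
    intro t
    simpa using ((hasDerivAt_id t).smul_const d).const_add x
  have hg : ∀ t : ℝ, HasDerivAt (fun s : ℝ => h (x + s • d))
      ⟪gradient h (x + t • d), d⟫ t := by
    intro t
    have h1 : HasFDerivAt h ((InnerProductSpace.toDual ℝ _) (gradient h (x + t • d))) (x + t • d) :=
      (hdiff _).hasGradientAt.hasFDerivAt
    simpa [InnerProductSpace.toDual_apply_apply, Function.comp_def] using (h1.comp_hasDerivAt t (hline t))
  have hgradcont : Continuous (gradient h) := by
    have : LipschitzWith (Real.toNNReal Lh) (gradient h) := by
      apply LipschitzWith.of_dist_le_mul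
      intro a b
      rw [dist_eq_norm, dist_eq_norm]
      refine (hlip a b).trans ?_
      gcongr
      exact Real.le_coe_toNNReal Lh
    exact this.continuous
  have hcont : Continuous fun t : ℝ => ⟪gradient h (x + t • d), d⟫ := by
    have : Continuous fun t : ℝ => x + t • d :=
      continuous_const.add (continuous_id.smul continuous_const)
    exact (hgradcont.comp this).inner continuous_const
  have hFTC : h y - h x = ∫ t in (0:ℝ)..1, ⟪gradient h (x + t • d), d⟫ := by
    have := intervalIntegral.integral_eq_sub_of_hasDerivAt
      (f := fun s : ℝ => h (x + s • d))
      (fun t _ => hg t) (hcont.intervalIntegrable 0 1)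
    rw [this]
    simp [hd]
  have hconst : ⟪gradient h x, d⟫ = ∫ t in (0:ℝ)..1, ⟪gradient h x, d⟫ := by simp
  have hsplit : h y - h x - ⟪gradient h x, d⟫
      = ∫ t in (0:ℝ)..1, (⟪gradient h (x + t • d), d⟫ - ⟪gradient h x, d⟫) := by
    rw [hFTC, hconst, ← intervalIntegral.integral_sub (hcont.intervalIntegrable 0 1)
      (intervalIntegrable_const)]
    simp
  rw [hsplit]
  have hbound : ∀ t ∈ Set.Icc (0:ℝ) 1,
      |⟪gradient h (x + t • d), d⟫ - ⟪gradient h x, d⟫| ≤ Lh * t * ‖d‖ ^ 2 := by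
    intro t ht
    rw [← inner_sub_left]
    calc |⟪gradient h (x + t • d) - gradient h x, d⟫|
        ≤ ‖gradient h (x + t • d) - gradient h x‖ * ‖d‖ := abs_real_inner_le_norm _ _
      _ ≤ (Lh * ‖(x + t • d) - x‖) * ‖d‖ := by
          gcongr; exact hlip _ _
      _ = Lh * t * ‖d‖ ^ 2 := by
          rw [add_sub_cancel_left, norm_smul, Real.norm_eq_abs, abs_of_nonneg ht.1]
          ring
  have step1 : |∫ t in (0:ℝ)..1, (⟪gradient h (x + t • d), d⟫ - ⟪gradient h x, d⟫)|
      ≤ ∫ t in (0:ℝ)..1, |⟪gradient h (x + t • d), d⟫ - ⟪gradient h x, d⟫| :=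
    intervalIntegral.abs_integral_le_integral_abs zero_le_one
  have step2 : (∫ t in (0:ℝ)..1, |⟪gradient h (x + t • d), d⟫ - ⟪gradient h x, d⟫|)
      ≤ ∫ t in (0:ℝ)..1, Lh * t * ‖d‖ ^ 2 := by
    apply intervalIntegral.integral_mono_on zero_le_one
    · exact ((hcont.sub continuous_const).abs).intervalIntegrable 0 1
    · exact (Continuous.intervalIntegrable
        ((continuous_const.mul continuous_id).mul continuous_const) 0 1)
    · exact hbound
  refine (step1.trans step2).trans (le_of_eq ?_)
  have : ∫ t in (0:ℝ)..1, Lh * t * ‖d‖ ^ 2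
      = (Lh * ‖d‖ ^ 2) * ∫ t in (0:ℝ)..1, t := by
    rw [← intervalIntegral.integral_const_mul]
    congr 1; ext t; ring
  rw [this, integral_id]
  ring

lemma lagr_P_diff {M N : ℕ} (H : Matrix (Fin N) (Fin M) ℝ) (ρ : ℝ)
    (f : EuclideanSpace ℝ (Fin M) → ℝ) (h : EuclideanSpace ℝ (Fin N) → ℝ)
    (U₀ : EuclideanSpace ℝ (Fin M)) (V₀ P₁ P₂ : EuclideanSpace ℝ (Fin N)) :
    lagr H ρ f h U₀ V₀ P₂ - lagr H ρ f h U₀ V₀ P₁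
      = ⟪P₂ - P₁, V₀ - mvec H U₀⟫ := by
  simp only [lagr, inner_sub_left]
  ring

lemma lagr_V_diff {M N : ℕ} (H : Matrix (Fin N) (Fin M) ℝ) (ρ : ℝ)
    (f : EuclideanSpace ℝ (Fin M) → ℝ) (h : EuclideanSpace ℝ (Fin N) → ℝ)
    (U₀ : EuclideanSpace ℝ (Fin M)) (V₁ V₂ P₀ G : EuclideanSpace ℝ (Fin N)) :
    lagr H ρ f h U₀ V₂ P₀ - lagr H ρ f h U₀ V₁ P₀
      = (h V₂ - h V₁ - ⟪G, V₂ - V₁⟫)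
        + ⟪G + P₀ + ρ • (V₁ - mvec H U₀), V₂ - V₁⟫
        + (ρ/2) * ‖V₂ - V₁‖ ^ 2 := by
  set A := mvec H U₀
  have hsq : ‖V₂ - A‖ ^ 2
      = ‖V₁ - A‖ ^ 2 + 2 * ⟪V₁ - A, V₂ - V₁⟫ + ‖V₂ - V₁‖ ^ 2 := by
    have : V₂ - A = (V₁ - A) + (V₂ - V₁) := by abel
    rw [this, norm_add_sq_real]
  have hP : ⟪P₀, V₂ - A⟫ = ⟪P₀, V₁ - A⟫ + ⟪P₀, V₂ - V₁⟫ := by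
    rw [← inner_add_right]
    congr 1
    abel
  simp only [lagr, show mvec H U₀ = A from rfl, hsq, hP, inner_add_left, real_inner_smul_left]
  ring

lemma lagr_V_hasFDeriv {M N : ℕ} (H : Matrix (Fin N) (Fin M) ℝ) (ρ : ℝ)
    (f : EuclideanSpace ℝ (Fin M) → ℝ) (h : EuclideanSpace ℝ (Fin N) → ℝ)
    (hdiff : Differentiable ℝ h) (U₀ : EuclideanSpace ℝ (Fin M))
    (V₀ P₀ : EuclideanSpace ℝ (Fin N)) :
    HasFDerivAt (fun V => lagr H ρ f h U₀ V P₀)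
      ((InnerProductSpace.toDual ℝ _)
        (gradient h V₀ + P₀ + ρ • (V₀ - mvec H U₀))) V₀ := by
  set A := mvec H U₀
  have h1 : HasFDerivAt h ((InnerProductSpace.toDual ℝ _) (gradient h V₀)) V₀ :=
    (hdiff _).hasGradientAt.hasFDerivAt
  have h2 : HasFDerivAt (fun V : EuclideanSpace ℝ (Fin N) => ⟪P₀, V - A⟫)
      (innerSL ℝ P₀) V₀ := by
    have := ((innerSL ℝ P₀).hasFDerivAt (x := V₀ - A)).comp V₀
      ((hasFDerivAt_id V₀).sub_const A)
    simpa [Function.comp_def] using this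
  have h3 : HasFDerivAt (fun V : EuclideanSpace ℝ (Fin N) => (ρ/2) * ‖V - A‖ ^ 2)
      ((ρ/2) • (2 • (innerSL ℝ (V₀ - A)))) V₀ := by
    have := ((hasFDerivAt_id V₀).sub_const A).norm_sq
    simpa using this.const_mul (ρ/2)
  have htot : HasFDerivAt (fun V => lagr H ρ f h U₀ V P₀) (0 + (InnerProductSpace.toDual ℝ _) (gradient h V₀)
      + innerSL ℝ P₀ + (ρ/2) • (2 • (innerSL ℝ (V₀ - A)))) V₀ := (((hasFDerivAt_const (f U₀) V₀).add h1).add h2).add h3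
  refine htot.congr_fderiv ?_
  ext w
  simp [InnerProductSpace.toDual_apply_apply, inner_add_left, real_inner_smul_left]
  ring

lemma V_stationarity {M N : ℕ} (H : Matrix (Fin N) (Fin M) ℝ) (ρ : ℝ)
    (f : EuclideanSpace ℝ (Fin M) → ℝ) (h : EuclideanSpace ℝ (Fin N) → ℝ)
    (hdiff : Differentiable ℝ h) (U₀ : EuclideanSpace ℝ (Fin M))
    (V₀ P₀ : EuclideanSpace ℝ (Fin N))
    (hmin : ∀ V' : EuclideanSpace ℝ (Fin N),
      lagr H ρ f h U₀ V₀ P₀ ≤ lagr H ρ f h U₀ V' P₀) :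
    gradient h V₀ + P₀ + ρ • (V₀ - mvec H U₀) = 0 := by
  have hloc : IsLocalMin (fun V => lagr H ρ f h U₀ V P₀) V₀ :=
    Filter.Eventually.of_forall hmin
  have hfd := lagr_V_hasFDeriv H ρ f h hdiff U₀ V₀ P₀
  have hz : fderiv ℝ (fun V => lagr H ρ f h U₀ V P₀) V₀ = 0 := hloc.fderiv_eq_zero
  have := hfd.fderiv
  rw [hz] at this
  have h0 := congrArg (InnerProductSpace.toDual ℝ (EuclideanSpace ℝ (Fin N))).symm this
  simpa [gradient] using h0.symm

set_option maxHeartbeats 1000000 in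
theorem admm_stationarity_residual_vanishes
    {M N : ℕ} (H : Matrix (Fin N) (Fin M) ℝ) (ρ Lh : ℝ)
    (hρ : 0 < ρ) (hLh : 0 < Lh)
    (f : EuclideanSpace ℝ (Fin M) → ℝ) (h : EuclideanSpace ℝ (Fin N) → ℝ)
    (hdiff : Differentiable ℝ h)
    (hlip : ∀ V W : EuclideanSpace ℝ (Fin N),
      ‖gradient h V - gradient h W‖ ≤ Lh * ‖V - W‖)
    (U : ℕ → EuclideanSpace ℝ (Fin M)) (V P : ℕ → EuclideanSpace ℝ (Fin N))
    (hUK : ∀ k, U k ∈ Kbox M)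
    (hUmin : ∀ k, ∀ U' ∈ Kbox M,
      lagr H ρ f h (U (k+1)) (V k) (P k) ≤ lagr H ρ f h U' (V k) (P k))
    (hVmin : ∀ k, ∀ V' : EuclideanSpace ℝ (Fin N),
      lagr H ρ f h (U (k+1)) (V (k+1)) (P k) ≤ lagr H ρ f h (U (k+1)) V' (P k))
    (hPup : ∀ k, P (k+1) = P k + ρ • (V (k+1) - mvec H (U (k+1))))
    (hcond : 0 < ρ / 2 - Lh / ρ - Lh)
    (hf : ∀ U' : EuclideanSpace ℝ (Fin M), 0 ≤ f U')
    (hh : ∀ V' : EuclideanSpace ℝ (Fin N), 0 ≤ h V')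
    :
    (∀ k : ℕ, 1 ≤ k →
      ‖mvec H.transpose (P k - P (k+1)) + ρ • mvec H.transpose (V k - V (k+1))‖ ≤
        ‖LinearMap.toContinuousLinearMap (Matrix.toEuclideanLin H)‖ * (Lh + ρ) *
          ‖V (k+1) - V k‖) ∧
      Tendsto
        (fun k => ‖mvec H.transpose (P k - P (k+1)) +
          ρ • mvec H.transpose (V k - V (k+1))‖) atTop (nhds 0) := by
  set C := ‖LinearMap.toContinuousLinearMap (Matrix.toEuclideanLin H)‖ with hCdef
  have hC : 0 ≤ C := norm_nonneg _
  -- basic consequences of hcond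
  have hρ2Lh : 2 * Lh < ρ := by nlinarith [div_pos hLh hρ]
  -- stationarity of the V-step
  have hstat : ∀ k, gradient h (V (k+1)) + P k + ρ • (V (k+1) - mvec H (U (k+1))) = 0 :=
    fun k => V_stationarity H ρ f h hdiff (U (k+1)) (V (k+1)) (P k) (hVmin k)
  -- P (k+1) = - gradient h (V (k+1))
  have hPg : ∀ k, P (k+1) = - gradient h (V (k+1)) := by
    intro k
    rw [hPup k, eq_neg_iff_add_eq_zero, ← hstat k]
    abel
  -- norm bound on dual increments, k ≥ 1
  have hΔP : ∀ j, ‖P (j+1) - P (j+2)‖ ≤ Lh * ‖V (j+2) - V (j+1)‖ := by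
    intro j
    rw [hPg j, hPg (j+1)]
    have : -gradient h (V (j+1)) - -gradient h (V (j+2))
        = gradient h (V (j+2)) - gradient h (V (j+1)) := by abel
    rw [this]
    exact hlip _ _
  -- Part 1
  have part1 : ∀ k : ℕ, 1 ≤ k →
      ‖mvec H.transpose (P k - P (k+1)) + ρ • mvec H.transpose (V k - V (k+1))‖ ≤
        C * (Lh + ρ) * ‖V (k+1) - V k‖ := by
    intro k hk
    obtain ⟨j, rfl⟩ := Nat.exists_eq_add_of_le hk
    set k := 1 + j with hkdef
    have hcomb : mvec H.transpose (P k - P (k+1)) + ρ • mvec H.transpose (V k - V (k+1))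
        = mvec H.transpose ((P k - P (k+1)) + ρ • (V k - V (k+1))) := by
      rw [mvec_add_smul]
    rw [hcomb]
    have hb1 : ‖(P k - P (k+1)) + ρ • (V k - V (k+1))‖
        ≤ Lh * ‖V (k+1) - V k‖ + ρ * ‖V (k+1) - V k‖ := by
      refine (norm_add_le _ _).trans ?_
      have e1 : ‖P k - P (k+1)‖ ≤ Lh * ‖V (k+1) - V k‖ := by
        have : k = j + 1 := by omega
        rw [this]
        have := hΔP j
        simpa [show j + 1 + 1 = j + 2 from rfl] using this
      have e2 : ‖ρ • (V k - V (k+1))‖ = ρ * ‖V (k+1) - V k‖ := by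
        rw [norm_smul, Real.norm_eq_abs, abs_of_pos hρ, norm_sub_rev]
      rw [e2]
      gcongr
    calc ‖mvec H.transpose ((P k - P (k+1)) + ρ • (V k - V (k+1)))‖
        ≤ C * ‖(P k - P (k+1)) + ρ • (V k - V (k+1))‖ := mvec_transpose_norm_le H _
      _ ≤ C * (Lh * ‖V (k+1) - V k‖ + ρ * ‖V (k+1) - V k‖) := by gcongr
      _ = C * (Lh + ρ) * ‖V (k+1) - V k‖ := by ring
  refine ⟨part1, ?_⟩
  -- ===== Part 2 : the residual tends to zero =====
  set ℓ : ℕ → ℝ := fun k => lagr H ρ f h (U k) (V k) (P k) with hℓ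
  set e : ℕ → ℝ := fun k => ‖V (k+1) - V k‖ with he
  set c : ℝ := (ρ - Lh) / 2 - Lh ^ 2 / ρ with hc
  have hcpos : 0 < c := by
    rw [hc]
    have h1 : Lh / ρ < 1 / 2 := by
      rw [div_lt_div_iff₀ hρ two_pos]; nlinarith
    have h2 : Lh ^ 2 / ρ < Lh / 2 := by
      have : Lh ^ 2 / ρ = Lh * (Lh / ρ) := by field_simp
      rw [this]
      nlinarith
    nlinarith
  -- Step A : U-step does not increase
  have stepA : ∀ k, lagr H ρ f h (U (k+1)) (V k) (P k) ≤ ℓ k :=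
    fun k => hUmin k (U k) (hUK k)
  -- Step B : V-step strong decrease
  have stepB : ∀ k, lagr H ρ f h (U (k+1)) (V (k+1)) (P k) + (ρ - Lh)/2 * (e k)^2
      ≤ lagr H ρ f h (U (k+1)) (V k) (P k) := by
    intro k
    have hdiffeq := lagr_V_diff H ρ f h (U (k+1)) (V (k+1)) (V k) (P k)
      (gradient h (V (k+1)))
    rw [hstat k] at hdiffeq
    have hzero : ⟪(0 : EuclideanSpace ℝ (Fin N)), V k - V (k+1)⟫ = 0 :=
      inner_zero_left _
    rw [hzero] at hdiffeq
    have hdl := descent_lemma h hdiff hlip hLh (V (k+1)) (V k)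
    have hnorm : ‖V k - V (k+1)‖ = e k := by rw [he, norm_sub_rev]
    rw [hnorm] at hdiffeq hdl
    have hlow : -(Lh/2 * (e k)^2)
        ≤ h (V k) - h (V (k+1)) - ⟪gradient h (V (k+1)), V k - V (k+1)⟫ :=
      neg_le_of_abs_le hdl
    linarith [hdiffeq, hlow]
  -- Step C : P-step increase bounded, k ≥ 1
  have stepC : ∀ j, ℓ (j+2) ≤ lagr H ρ f h (U (j+2)) (V (j+2)) (P (j+1))
      + Lh^2/ρ * (e (j+1))^2 := by
    intro j
    have hpd := lagr_P_diff H ρ f h (U (j+2)) (V (j+2)) (P (j+1)) (P (j+2))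
    have hr : P (j+2) - P (j+1) = ρ • (V (j+2) - mvec H (U (j+2))) := by
      rw [hPup (j+1)]; abel
    have hip : ⟪P (j+2) - P (j+1), V (j+2) - mvec H (U (j+2))⟫
        = (1/ρ) * ‖P (j+2) - P (j+1)‖^2 := by
      rw [hr, real_inner_smul_left, real_inner_self_eq_norm_sq, norm_smul,
        Real.norm_eq_abs, abs_of_pos hρ]
      field_simp
    have hub : ‖P (j+2) - P (j+1)‖ ≤ Lh * e (j+1) := by
      rw [norm_sub_rev]
      exact hΔP j
    have hnn : 0 ≤ e (j+1) := norm_nonneg _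
    have h2 : (1/ρ) * ‖P (j+2) - P (j+1)‖^2 ≤ Lh^2/ρ * (e (j+1))^2 := by
      have := sq_le_sq' (by linarith [norm_nonneg (P (j+2) - P (j+1))]) hub
      have h3 : ‖P (j+2) - P (j+1)‖^2 ≤ (Lh * e (j+1))^2 := by
        nlinarith [norm_nonneg (P (j+2) - P (j+1))]
      calc (1/ρ) * ‖P (j+2) - P (j+1)‖^2 ≤ (1/ρ) * (Lh * e (j+1))^2 := by
            gcongr
        _ = Lh^2/ρ * (e (j+1))^2 := by ring
    linarith [hpd, hip ▸ hpd, h2,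
      (hip ▸ hpd : ℓ (j+2) - lagr H ρ f h (U (j+2)) (V (j+2)) (P (j+1))
        = (1/ρ) * ‖P (j+2) - P (j+1)‖^2)]
  -- combined descent, k ≥ 1
  have hchain : ∀ j, ℓ (j+2) + c * (e (j+1))^2 ≤ ℓ (j+1) := by
    intro j
    have hA := stepA (j+1)
    have hB := stepB (j+1)
    have hC := stepC j
    rw [hc]
    linarith
  -- lower bound : ℓ k ≥ 0 for k ≥ 1
  have hlow : ∀ j, 0 ≤ ℓ (j+1) := by
    intro j
    have hPk : P (j+1) = - gradient h (V (j+1)) := hPg j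
    set r : EuclideanSpace ℝ (Fin N) := V (j+1) - mvec H (U (j+1)) with hr
    have hdl := descent_lemma h hdiff hlip hLh (V (j+1)) (mvec H (U (j+1)))
    have hyx : mvec H (U (j+1)) - V (j+1) = -r := by rw [hr]; abel
    rw [hyx] at hdl
    have hnr : ‖-r‖ = ‖r‖ := norm_neg r
    rw [hnr] at hdl
    have hip : ⟪P (j+1), r⟫ = ⟪gradient h (V (j+1)), -r⟫ := by
      rw [hPk, inner_neg_left, inner_neg_right]
    have hlow2 : h (mvec H (U (j+1))) - h (V (j+1)) - Lh/2 * ‖r‖^2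
        ≤ ⟪gradient h (V (j+1)), -r⟫ := by
      have := le_of_abs_le hdl
      linarith
    have : ℓ (j+1) = f (U (j+1)) + h (V (j+1)) + ⟪P (j+1), r⟫ + (ρ/2) * ‖r‖^2 := rfl
    rw [this, hip]
    have hfnn := hf (U (j+1))
    have hhnn := hh (mvec H (U (j+1)))
    nlinarith [norm_nonneg r, sq_nonneg ‖r‖]
  -- convergence of the shifted Lagrangian
  set b : ℕ → ℝ := fun j => ℓ (j+1) with hb
  have hbmono : Antitone b := by
    apply antitone_nat_of_succ_le
    intro j
    have h1 := hchain j
    have h0 : 0 ≤ c * (e (j+1))^2 := by positivity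
    show ℓ (j+1+1) ≤ ℓ (j+1)
    have h2 : ℓ (j+1+1) = ℓ (j+2) := by norm_num
    linarith
  have hbdd : BddBelow (Set.range b) := by
    refine ⟨0, ?_⟩
    rintro x ⟨j, rfl⟩
    exact hlow j
  have htb : Tendsto b atTop (nhds (⨅ j, b j)) := tendsto_atTop_ciInf hbmono hbdd
  have htb' : Tendsto (fun j => b (j+1)) atTop (nhds (⨅ j, b j)) :=
    (tendsto_add_atTop_iff_nat 1).mpr htb
  have hdiff0 : Tendsto (fun j => b j - b (j+1)) atTop (nhds 0) := by
    simpa using htb.sub htb'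
  have hce2 : Tendsto (fun j => c * (e (j+1))^2) atTop (nhds 0) := by
    apply tendsto_of_tendsto_of_tendsto_of_le_of_le tendsto_const_nhds hdiff0
    · intro j
      positivity
    · intro j
      have := hchain j
      simp only [hb]
      have hj2 : ℓ (j+1+1) = b (j+1) := rfl
      linarith
  have he2 : Tendsto (fun j => (e (j+1))^2) atTop (nhds 0) := by
    have h1 : Tendsto (fun j => (1/c) * (c * (e (j+1))^2)) atTop (nhds 0) := by
      simpa using hce2.const_mul (1/c)
    exact h1.congr (fun j => by rw [one_div, inv_mul_cancel_left₀ hcpos.ne'])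
  have heshift : Tendsto (fun j => e (j+1)) atTop (nhds 0) := by
    have hsqrt : Tendsto (fun j => Real.sqrt ((e (j+1))^2)) atTop (nhds (Real.sqrt 0)) :=
      (Real.continuous_sqrt.continuousAt).tendsto.comp he2
    simpa [Real.sqrt_sq (norm_nonneg _), Real.sqrt_zero, he] using hsqrt
  have he0 : Tendsto e atTop (nhds 0) := (tendsto_add_atTop_iff_nat 1).mp heshift
  have hCe : Tendsto (fun k => C * (Lh + ρ) * e k) atTop (nhds 0) := by
    simpa using he0.const_mul (C * (Lh + ρ))
  apply tendsto_of_tendsto_of_tendsto_of_le_of_le' tendsto_const_nhds hCe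
  · exact Filter.Eventually.of_forall (fun k => norm_nonneg _)
  · filter_upwards [eventually_ge_atTop 1] with k hk
    exact part1 k hk
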